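/- Let A₁, A₂, A₃, B₁, B₂, B₃ be positive differentiable functions on (0,∞), and let aᵢ± solve the decoupled linear ODEs aᵢ⁺' = −(Aᵢ/(BⱼB_k) − Aᵢ/(AⱼA_k))aᵢ⁺ and aᵢ⁻' = −(Bᵢ/(BⱼA_k) + Bᵢ/(AⱼB_k))aᵢ⁻ for each cyclic permutation {i,j,k} of {1,2,3}. If Aᵢ(t) = t/2 + O(t³) and Bᵢ(t) = b₀ + O(t²) with b₀ > 0, then aᵢ⁺(t) ~ aᵢ⁺(t₀)t₀⁻²t² and aᵢ⁻(t) ~ aᵢ⁻(t₀)t₀⁴t⁻⁴ as t → 0⁺. In particular aᵢ⁻ extends continuously to 0 only if aᵢ⁻ ≡ 0. -/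

import Mathlib

open Real Filter Topology Asymptotics

/-- `(i, j, k)` is a cyclic permutation of `(0, 1, 2)` in `Fin 3`. -/
def Cyclic3 (i j k : Fin 3) : Prop :=
  (i, j, k) = ((0:Fin 3), (1:Fin 3), (2:Fin 3)) ∨
  (i, j, k) = ((1:Fin 3), (2:Fin 3), (0:Fin 3)) ∨
  (i, j, k) = ((2:Fin 3), (0:Fin 3), (1:Fin 3))

open MeasureTheory intervalIntegral Set


lemma key (a f : ℝ → ℝ) (n : ℝ) (t₀ : ℝ) (ht₀ : 0 < t₀)
    (hfc : ContinuousOn f (Set.Ioi 0))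
    (hda : ∀ t ∈ Set.Ioi (0:ℝ), HasDerivAt a (f t * a t) t)
    (hf : (fun t => f t - n / t) =O[𝓝[>] (0:ℝ)] fun t => t) :
    ∃ L : ℝ, Tendsto (fun t => a t * Real.exp (-(n * Real.log t))) (𝓝[>] (0:ℝ)) (𝓝 L) ∧
      (L = 0 ↔ a t₀ = 0) ∧ (a t₀ = 0 → ∀ t ∈ Set.Ioi (0:ℝ), a t = 0) := by
  -- interval integrability of f on positive intervals
  have hfi : ∀ u v : ℝ, 0 < u → 0 < v → IntervalIntegrable f volume u v := by
    intro u v hu hv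
    apply ContinuousOn.intervalIntegrable
    apply hfc.mono
    intro x hx
    rcases le_total u v with h | h
    · rw [Set.uIcc_of_le h] at hx; exact lt_of_lt_of_le hu hx.1
    · rw [Set.uIcc_of_ge h] at hx; exact lt_of_lt_of_le hv hx.1
  set F : ℝ → ℝ := fun t => ∫ s in t₀..t, f s with hF
  -- constancy: a t * exp (-(F t)) = a t₀ for all t > 0
  have hconst : ∀ t ∈ Set.Ioi (0:ℝ), a t * Real.exp (-(F t)) = a t₀ := by
    intro t ht
    have hderiv : ∀ x ∈ Set.uIcc t₀ t, HasDerivAt (fun u => a u * Real.exp (-(F u))) 0 x := by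
      intro x hx
      have hx0 : 0 < x := by
        rcases le_total t₀ t with h | h
        · rw [Set.uIcc_of_le h] at hx; exact lt_of_lt_of_le ht₀ hx.1
        · rw [Set.uIcc_of_ge h] at hx; exact lt_of_lt_of_le ht hx.1
      have hFd : HasDerivAt F (f x) x := by
        apply intervalIntegral.integral_hasDerivAt_right (hfi t₀ x ht₀ hx0)
        · exact ⟨Set.Ioi 0, Ioi_mem_nhds hx0, hfc.aestronglyMeasurable measurableSet_Ioi⟩
        · exact hfc.continuousAt (Ioi_mem_nhds hx0)
      have he : HasDerivAt (fun u => Real.exp (-(F u))) (Real.exp (-(F x)) * (-(f x))) x := by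
        have := (hFd.neg).exp
        simpa using this
      have := (hda x hx0).mul he
      refine this.congr_deriv ?_
      ring
    have hint : IntervalIntegrable (fun _ : ℝ => (0:ℝ)) volume t₀ t :=
      intervalIntegrable_const
    have := intervalIntegral.integral_eq_sub_of_hasDerivAt hderiv hint
    simp only [intervalIntegral.integral_zero] at this
    have hFt₀ : F t₀ = 0 := by simp [hF]
    rw [hFt₀] at this
    simp at this
    linarith
  -- the remainder term
  set r : ℝ → ℝ := fun s => f s - n / s with hr
  have hrc : ContinuousOn r (Set.Ioi 0) := by
    apply hfc.sub
    exact continuousOn_const.div continuousOn_id (fun x hx => ne_of_gt hx)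
  -- bound near 0
  obtain ⟨c, hc0, hc⟩ := hf.exists_pos
  rw [IsBigOWith] at hc
  obtain ⟨s, hs, hsub⟩ := mem_nhdsGT_iff_exists_Ioc_subset.1 hc
  set δ : ℝ := min s t₀ with hδ
  have hδ0 : 0 < δ := lt_min hs ht₀
  have hδt₀ : δ ≤ t₀ := min_le_right _ _
  have hbound : ∀ x ∈ Set.Ioc (0:ℝ) δ, ‖r x‖ ≤ c * δ := by
    intro x hx
    have := hsub ⟨hx.1, le_trans hx.2 (min_le_left _ _)⟩
    calc ‖r x‖ ≤ c * ‖x‖ := this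
    _ ≤ c * δ := by
        rw [Real.norm_eq_abs, abs_of_pos hx.1]
        exact mul_le_mul_of_nonneg_left hx.2 hc0.le
  -- r is integrable on Ioc 0 t₀
  have hint1 : IntegrableOn r (Set.Ioc 0 δ) := by
    apply Integrable.mono' (g := fun _ => c * δ)
    · exact integrableOn_const measure_Ioc_lt_top.ne
    · exact (hrc.mono (fun x hx => hx.1)).aestronglyMeasurable measurableSet_Ioc
    · exact (ae_restrict_iff' measurableSet_Ioc).2 (Filter.Eventually.of_forall hbound)
  have hint2 : IntegrableOn r (Set.Ioc δ t₀) := by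
    apply ((hrc.mono (fun x hx => lt_of_lt_of_le hδ0 hx.1)).integrableOn_compact
      isCompact_Icc).mono_set Set.Ioc_subset_Icc_self
  have hintr : IntegrableOn r (Set.Ioc 0 t₀) := by
    rw [← Set.Ioc_union_Ioc_eq_Ioc hδ0.le hδt₀]
    exact hint1.union hint2
  -- the primitive of r
  set P : ℝ → ℝ := fun x => ∫ t in Set.Ioc 0 x, r t with hP
  have hPc : ContinuousOn P (Set.Icc 0 t₀) := by
    apply continuousOn_primitive
    rwa [integrableOn_Icc_iff_integrableOn_Ioc]
  have hP0 : P 0 = 0 := by simp [hP]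
  have hPt : Tendsto P (𝓝[>] (0:ℝ)) (𝓝 0) := by
    have := (hPc 0 ⟨le_refl 0, ht₀.le⟩).tendsto
    rw [hP0] at this
    have h2 : 𝓝[>] (0:ℝ) = 𝓝[Set.Ioc 0 t₀] (0:ℝ) :=
      (nhdsWithin_Ioc_eq_nhdsGT ht₀).symm
    rw [h2]
    exact this.mono_left (nhdsWithin_mono 0 Set.Ioc_subset_Icc_self)
  -- interval integral of r from t to t₀ equals P t₀ - P t for 0 < t ≤ t₀
  have hsplit : ∀ t : ℝ, 0 < t → t ≤ t₀ → (∫ s in t..t₀, r s) = P t₀ - P t := by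
    intro t ht hle
    have h1 : IntervalIntegrable r volume 0 t := by
      rw [intervalIntegrable_iff_integrableOn_Ioc_of_le ht.le]
      exact hintr.mono_set (Set.Ioc_subset_Ioc le_rfl hle)
    have h2 : IntervalIntegrable r volume t t₀ := by
      rw [intervalIntegrable_iff_integrableOn_Ioc_of_le hle]
      exact hintr.mono_set (Set.Ioc_subset_Ioc ht.le le_rfl)
    have hadd := intervalIntegral.integral_add_adjacent_intervals h1 h2
    have e1 : (∫ s in (0:ℝ)..t, r s) = P t := intervalIntegral.integral_of_le ht.le
    have e2 : (∫ s in (0:ℝ)..t₀, r s) = P t₀ := intervalIntegral.integral_of_le ht₀.le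
    rw [e1, e2] at hadd
    linarith
  -- rewrite F t - n * log t
  have hFr : ∀ t : ℝ, 0 < t → t ≤ t₀ →
      F t - n * Real.log t = -(P t₀ - P t) - n * Real.log t₀ := by
    intro t ht hle
    have hFsym : F t = -(∫ s in t..t₀, f s) := intervalIntegral.integral_symm t t₀
    have hfeq : ∀ s ∈ Set.uIcc t t₀, f s = r s + n * (1/s) := by
      intro s hs
      rw [Set.uIcc_of_le hle] at hs
      have hs0 : s ≠ 0 := ne_of_gt (lt_of_lt_of_le ht hs.1)
      simp only [hr, mul_one_div, sub_add_cancel]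
    have h2 : IntervalIntegrable r volume t t₀ := by
      rw [intervalIntegrable_iff_integrableOn_Ioc_of_le hle]
      exact hintr.mono_set (Set.Ioc_subset_Ioc ht.le le_rfl)
    have h3 : IntervalIntegrable (fun s => n * (1/s)) volume t t₀ := by
      apply ContinuousOn.intervalIntegrable
      rw [Set.uIcc_of_le hle]
      apply continuousOn_const.mul
      apply continuousOn_const.div continuousOn_id
      intro x hx; exact ne_of_gt (lt_of_lt_of_le ht hx.1)
    have hcongr : (∫ s in t..t₀, f s) = ∫ s in t..t₀, (r s + n * (1/s)) :=
      intervalIntegral.integral_congr hfeq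
    rw [intervalIntegral.integral_add h2 h3, intervalIntegral.integral_const_mul,
      integral_one_div (by
        rw [Set.uIcc_of_le hle]; intro h0; exact absurd h0.1 (not_le.2 ht))] at hcongr
    rw [hFsym, hcongr, hsplit t ht hle, Real.log_div (ne_of_gt ht₀) (ne_of_gt ht)]
    ring
  -- the limit
  refine ⟨a t₀ * Real.exp (-(P t₀ - 0) - n * Real.log t₀), ?_, ?_, ?_⟩
  · have heq : ∀ᶠ t in 𝓝[>] (0:ℝ), a t * Real.exp (-(n * Real.log t)) =
        a t₀ * Real.exp (-(P t₀ - P t) - n * Real.log t₀) := by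
      filter_upwards [Ioo_mem_nhdsGT_of_mem ⟨le_refl (0:ℝ), ht₀⟩] with t ht
      have ht' : (0:ℝ) < t := ht.1
      have h1 := hconst t ht'
      have h2 := hFr t ht' ht.2.le
      have : a t = a t₀ * Real.exp (F t) := by
        have he := Real.exp_pos (-(F t))
        field_simp [← h1, Real.exp_neg]
        rw [← h1, mul_assoc, ← Real.exp_add, neg_add_cancel, Real.exp_zero, mul_one]
      rw [this, mul_assoc, ← Real.exp_add, ← h2]
      congr 1
    rw [tendsto_congr' heq]
    apply Tendsto.const_mul
    apply Real.continuous_exp.continuousAt.tendsto.comp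
    have : Tendsto (fun t => -(P t₀ - P t) - n * Real.log t₀) (𝓝[>] (0:ℝ))
        (𝓝 (-(P t₀ - 0) - n * Real.log t₀)) := by
      apply Tendsto.sub_const
      apply Tendsto.neg
      exact (tendsto_const_nhds.sub hPt)
    exact this
  · constructor
    · intro h
      by_contra ha
      exact (mul_ne_zero ha (Real.exp_ne_zero _)) h
    · intro h; rw [h, zero_mul]
  · intro h t ht
    have := hconst t ht
    rw [h] at this
    have he := Real.exp_pos (-(F t))
    nlinarith [this]



lemma evA (A1 : ℝ → ℝ) (h : (fun t => A1 t - t/2) =O[𝓝[>] (0:ℝ)] fun t => t^3) :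
    ∀ᶠ t in 𝓝[>] (0:ℝ), t/4 ≤ A1 t ∧ A1 t ≤ t := by
  obtain ⟨c, hc0, hc⟩ := h.exists_pos
  rw [IsBigOWith] at hc
  have h2 : Tendsto (fun t : ℝ => c * t^2) (𝓝[>] (0:ℝ)) (𝓝 0) := by
    have : Tendsto (fun t : ℝ => c * t^2) (𝓝 0) (𝓝 (c * 0^2)) :=
      (continuous_const.mul (continuous_pow 2)).tendsto 0
    simpa using this.mono_left nhdsWithin_le_nhds
  filter_upwards [hc, h2.eventually_le_const (show (0:ℝ) < 1/4 by norm_num),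
    self_mem_nhdsWithin] with t h1 h2 h3
  have ht : (0:ℝ) < t := h3
  rw [Real.norm_eq_abs, Real.norm_eq_abs, abs_of_pos (by positivity : (0:ℝ) < t^3)] at h1
  have := abs_le.1 h1
  constructor <;> nlinarith [this.1, this.2]

lemma evB (B1 : ℝ → ℝ) (b₀ : ℝ) (hb₀ : 0 < b₀)
    (h : (fun t => B1 t - b₀) =O[𝓝[>] (0:ℝ)] fun t => t^2) :
    ∀ᶠ t in 𝓝[>] (0:ℝ), b₀/2 ≤ B1 t ∧ B1 t ≤ 2*b₀ := by
  obtain ⟨c, hc0, hc⟩ := h.exists_pos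
  rw [IsBigOWith] at hc
  have h2 : Tendsto (fun t : ℝ => c * t^2) (𝓝[>] (0:ℝ)) (𝓝 0) := by
    have : Tendsto (fun t : ℝ => c * t^2) (𝓝 0) (𝓝 (c * 0^2)) :=
      (continuous_const.mul (continuous_pow 2)).tendsto 0
    simpa using this.mono_left nhdsWithin_le_nhds
  filter_upwards [hc, h2.eventually_le_const (show (0:ℝ) < b₀/2 by positivity),
    self_mem_nhdsWithin] with t h1 h2 h3
  have ht : (0:ℝ) < t := h3
  rw [Real.norm_eq_abs, Real.norm_eq_abs, abs_of_pos (by positivity : (0:ℝ) < t^2)] at h1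
  have := abs_le.1 h1
  constructor <;> nlinarith [this.1, this.2]

-- A-type functions are O(t)
lemma Abig (A1 : ℝ → ℝ) (h : (fun t => A1 t - t/2) =O[𝓝[>] (0:ℝ)] fun t => t^3) :
    A1 =O[𝓝[>] (0:ℝ)] fun t => t := by
  rw [isBigO_iff]
  refine ⟨1, ?_⟩
  filter_upwards [evA A1 h, self_mem_nhdsWithin] with t h1 h2
  have ht : (0:ℝ) < t := h2
  rw [Real.norm_eq_abs, Real.norm_eq_abs, abs_of_pos ht,
    abs_of_pos (lt_of_lt_of_le (by positivity) h1.1)]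
  linarith [h1.2]

-- powers shrink near zero
lemma pow_shrink (m k : ℕ) (hmk : k ≤ m) :
    (fun t : ℝ => t^m) =O[𝓝[>] (0:ℝ)] fun t => t^k := by
  rw [isBigO_iff]
  refine ⟨1, ?_⟩
  filter_upwards [Ioo_mem_nhdsGT_of_mem ⟨le_refl (0:ℝ), one_pos⟩] with t ht
  have ht0 : (0:ℝ) < t := ht.1
  rw [Real.norm_eq_abs, Real.norm_eq_abs, abs_of_pos (by positivity : (0:ℝ) < t^m),
    abs_of_pos (by positivity : (0:ℝ) < t^k), one_mul]
  exact pow_le_pow_of_le_one ht.1.le ht.2.le hmk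

lemma termP (A1 A2 A3 : ℝ → ℝ)
    (h1 : (fun t => A1 t - t/2) =O[𝓝[>] (0:ℝ)] fun t => t^3)
    (h2 : (fun t => A2 t - t/2) =O[𝓝[>] (0:ℝ)] fun t => t^3)
    (h3 : (fun t => A3 t - t/2) =O[𝓝[>] (0:ℝ)] fun t => t^3) :
    (fun t => A1 t / (A2 t * A3 t) - 2/t) =O[𝓝[>] (0:ℝ)] fun t => t := by
  have ha : (fun t => t * (A1 t - t/2)) =O[𝓝[>] (0:ℝ)] fun t => t^4 :=
    ((isBigO_refl (fun t : ℝ => t) _).mul h1).congr (fun x => rfl) (fun x => by ring)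
  have hb : (fun t => t * (A2 t - t/2)) =O[𝓝[>] (0:ℝ)] fun t => t^4 :=
    ((isBigO_refl (fun t : ℝ => t) _).mul h2).congr (fun x => rfl) (fun x => by ring)
  have hc : (fun t => t * (A3 t - t/2)) =O[𝓝[>] (0:ℝ)] fun t => t^4 :=
    ((isBigO_refl (fun t : ℝ => t) _).mul h3).congr (fun x => rfl) (fun x => by ring)
  have hd : (fun t => 2 * ((A2 t - t/2) * (A3 t - t/2))) =O[𝓝[>] (0:ℝ)] fun t => t^4 :=
    (((h2.mul h3).congr (fun x => rfl) (fun x => by ring)).trans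
      (pow_shrink 6 4 (by norm_num))).const_mul_left 2
  have hnum : (fun t => t * A1 t - 2 * (A2 t * A3 t)) =O[𝓝[>] (0:ℝ)] fun t => t^4 :=
    (((ha.sub hb).sub hc).sub hd).congr (fun x => by ring) (fun x => rfl)
  have hinv : (fun t => 1 / (t * (A2 t * A3 t))) =O[𝓝[>] (0:ℝ)] fun t => 1/t^3 := by
    rw [isBigO_iff]
    refine ⟨16, ?_⟩
    filter_upwards [evA A2 h2, evA A3 h3, self_mem_nhdsWithin] with t k2 k3 kt
    have ht : (0:ℝ) < t := kt
    have p2 : (0:ℝ) < A2 t := lt_of_lt_of_le (by positivity) k2.1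
    have p3 : (0:ℝ) < A3 t := lt_of_lt_of_le (by positivity) k3.1
    have hD : (0:ℝ) < t * (A2 t * A3 t) := by positivity
    rw [Real.norm_eq_abs, Real.norm_eq_abs, abs_of_pos (by positivity),
      abs_of_pos (by positivity : (0:ℝ) < 1/t^3), mul_one_div, div_le_div_iff₀ hD (by positivity)]
    nlinarith [mul_le_mul k2.1 k3.1 (by positivity : (0:ℝ) ≤ t/4) p2.le]
  have hprod := hnum.mul hinv
  have heq1 : (fun t => (t * A1 t - 2 * (A2 t * A3 t)) * (1 / (t * (A2 t * A3 t))))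
      =ᶠ[𝓝[>] (0:ℝ)] fun t => A1 t / (A2 t * A3 t) - 2/t := by
    filter_upwards [evA A2 h2, evA A3 h3, self_mem_nhdsWithin] with t k2 k3 kt
    have ht : (0:ℝ) < t := kt
    have p2 : (0:ℝ) < A2 t := lt_of_lt_of_le (by positivity) k2.1
    have p3 : (0:ℝ) < A3 t := lt_of_lt_of_le (by positivity) k3.1
    field_simp
  have heq2 : (fun t : ℝ => t^4 * (1/t^3)) =ᶠ[𝓝[>] (0:ℝ)] fun t => t := by
    filter_upwards [self_mem_nhdsWithin] with t kt
    have ht : (0:ℝ) < t := kt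
    field_simp
  exact hprod.congr' heq1 heq2

lemma termM (B1 B2 A3 : ℝ → ℝ) (b₀ : ℝ) (hb₀ : 0 < b₀)
    (g1 : (fun t => B1 t - b₀) =O[𝓝[>] (0:ℝ)] fun t => t^2)
    (g2 : (fun t => B2 t - b₀) =O[𝓝[>] (0:ℝ)] fun t => t^2)
    (h3 : (fun t => A3 t - t/2) =O[𝓝[>] (0:ℝ)] fun t => t^3) :
    (fun t => B1 t / (B2 t * A3 t) - 2/t) =O[𝓝[>] (0:ℝ)] fun t => t := by
  have ha : (fun t => t * (B1 t - b₀)) =O[𝓝[>] (0:ℝ)] fun t => t^3 :=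
    ((isBigO_refl (fun t : ℝ => t) _).mul g1).congr (fun x => rfl) (fun x => by ring)
  have hb : (fun t => 2 * b₀ * (A3 t - t/2)) =O[𝓝[>] (0:ℝ)] fun t => t^3 :=
    (h3.const_mul_left (2 * b₀))
  have hc : (fun t => 2 * ((B2 t - b₀) * A3 t)) =O[𝓝[>] (0:ℝ)] fun t => t^3 :=
    ((g2.mul (Abig A3 h3)).congr (fun x => rfl) (fun x => by ring)).const_mul_left 2
  have hnum : (fun t => t * B1 t - 2 * (B2 t * A3 t)) =O[𝓝[>] (0:ℝ)] fun t => t^3 :=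
    ((ha.sub hb).sub hc).congr (fun x => by ring) (fun x => rfl)
  have hinv : (fun t => 1 / (t * (B2 t * A3 t))) =O[𝓝[>] (0:ℝ)] fun t => 1/t^2 := by
    rw [isBigO_iff]
    refine ⟨8/b₀, ?_⟩
    filter_upwards [evB B2 b₀ hb₀ g2, evA A3 h3, self_mem_nhdsWithin] with t k2 k3 kt
    have ht : (0:ℝ) < t := kt
    have p2 : (0:ℝ) < B2 t := lt_of_lt_of_le (by positivity) k2.1
    have p3 : (0:ℝ) < A3 t := lt_of_lt_of_le (by positivity) k3.1
    have hD : (0:ℝ) < t * (B2 t * A3 t) := by positivity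
    rw [Real.norm_eq_abs, Real.norm_eq_abs, abs_of_pos (by positivity),
      abs_of_pos (by positivity : (0:ℝ) < 1/t^2), mul_one_div, div_le_div_iff₀ hD (by positivity)]
    rw [div_mul_eq_mul_div, le_div_iff₀ hb₀]
    nlinarith [mul_le_mul k2.1 k3.1 (by positivity : (0:ℝ) ≤ t/4) p2.le]
  have hprod := hnum.mul hinv
  have heq1 : (fun t => (t * B1 t - 2 * (B2 t * A3 t)) * (1 / (t * (B2 t * A3 t))))
      =ᶠ[𝓝[>] (0:ℝ)] fun t => B1 t / (B2 t * A3 t) - 2/t := by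
    filter_upwards [evB B2 b₀ hb₀ g2, evA A3 h3, self_mem_nhdsWithin] with t k2 k3 kt
    have ht : (0:ℝ) < t := kt
    have p2 : (0:ℝ) < B2 t := lt_of_lt_of_le (by positivity) k2.1
    have p3 : (0:ℝ) < A3 t := lt_of_lt_of_le (by positivity) k3.1
    field_simp
  have heq2 : (fun t : ℝ => t^3 * (1/t^2)) =ᶠ[𝓝[>] (0:ℝ)] fun t => t := by
    filter_upwards [self_mem_nhdsWithin] with t kt
    have ht : (0:ℝ) < t := kt
    field_simp
  exact hprod.congr' heq1 heq2

lemma coefP (A1 A2 A3 B2 B3 : ℝ → ℝ) (b₀ : ℝ) (hb₀ : 0 < b₀)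
    (h1 : (fun t => A1 t - t/2) =O[𝓝[>] (0:ℝ)] fun t => t^3)
    (h2 : (fun t => A2 t - t/2) =O[𝓝[>] (0:ℝ)] fun t => t^3)
    (h3 : (fun t => A3 t - t/2) =O[𝓝[>] (0:ℝ)] fun t => t^3)
    (g2 : (fun t => B2 t - b₀) =O[𝓝[>] (0:ℝ)] fun t => t^2)
    (g3 : (fun t => B3 t - b₀) =O[𝓝[>] (0:ℝ)] fun t => t^2) :
    (fun t => -(A1 t / (B2 t * B3 t) - A1 t / (A2 t * A3 t)) - 2/t)
      =O[𝓝[>] (0:ℝ)] fun t => t := by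
  have hE2 : (fun t => A1 t / (B2 t * B3 t)) =O[𝓝[>] (0:ℝ)] fun t => t := by
    have hinvB : (fun t => 1 / (B2 t * B3 t)) =O[𝓝[>] (0:ℝ)] fun _ => (1:ℝ) := by
      rw [isBigO_iff]
      refine ⟨4/b₀^2, ?_⟩
      filter_upwards [evB B2 b₀ hb₀ g2, evB B3 b₀ hb₀ g3] with t k2 k3
      have p2 : (0:ℝ) < B2 t := lt_of_lt_of_le (by positivity) k2.1
      have p3 : (0:ℝ) < B3 t := lt_of_lt_of_le (by positivity) k3.1
      rw [Real.norm_eq_abs, norm_one, abs_of_pos (by positivity : (0:ℝ) < 1/(B2 t * B3 t)),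
        mul_one, div_le_div_iff₀ (by positivity) (by positivity)]
      nlinarith [mul_le_mul k2.1 k3.1 (by positivity : (0:ℝ) ≤ b₀/2) p2.le]
    exact (((Abig A1 h1).mul hinvB).congr
      (fun x => by ring) (fun x => by rw [mul_one]))
  exact ((termP A1 A2 A3 h1 h2 h3).sub hE2).congr (fun x => by ring) (fun x => rfl)

lemma coefM (B1 B2 B3 A2 A3 : ℝ → ℝ) (b₀ : ℝ) (hb₀ : 0 < b₀)
    (g1 : (fun t => B1 t - b₀) =O[𝓝[>] (0:ℝ)] fun t => t^2)
    (g2 : (fun t => B2 t - b₀) =O[𝓝[>] (0:ℝ)] fun t => t^2)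
    (g3 : (fun t => B3 t - b₀) =O[𝓝[>] (0:ℝ)] fun t => t^2)
    (h2 : (fun t => A2 t - t/2) =O[𝓝[>] (0:ℝ)] fun t => t^3)
    (h3 : (fun t => A3 t - t/2) =O[𝓝[>] (0:ℝ)] fun t => t^3) :
    (fun t => -(B1 t / (B2 t * A3 t) + B1 t / (A2 t * B3 t)) - (-4)/t)
      =O[𝓝[>] (0:ℝ)] fun t => t := by
  have hT1 := termM B1 B2 A3 b₀ hb₀ g1 g2 h3
  have hT2 := (termM B1 B3 A2 b₀ hb₀ g1 g3 h2).congr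
    (fun x => by rw [mul_comm (B3 x) (A2 x)]) (fun x => rfl)
  exact ((hT1.add hT2).neg_left).congr (fun x => by ring) (fun x => rfl)

lemma perIndex (Ai Aj Ak Bi Bj Bk api ami : ℝ → ℝ) (b₀ : ℝ) (hb₀ : 0 < b₀)
    (hAjpos : ∀ t ∈ Set.Ioi (0:ℝ), 0 < Aj t) (hAkpos : ∀ t ∈ Set.Ioi (0:ℝ), 0 < Ak t)
    (hBjpos : ∀ t ∈ Set.Ioi (0:ℝ), 0 < Bj t) (hBkpos : ∀ t ∈ Set.Ioi (0:ℝ), 0 < Bk t)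
    (hAic : ContinuousOn Ai (Set.Ioi 0)) (hAjc : ContinuousOn Aj (Set.Ioi 0))
    (hAkc : ContinuousOn Ak (Set.Ioi 0)) (hBic : ContinuousOn Bi (Set.Ioi 0))
    (hBjc : ContinuousOn Bj (Set.Ioi 0)) (hBkc : ContinuousOn Bk (Set.Ioi 0))
    (hAi : (fun t => Ai t - t/2) =O[𝓝[>] (0:ℝ)] fun t => t^3)
    (hAj : (fun t => Aj t - t/2) =O[𝓝[>] (0:ℝ)] fun t => t^3)
    (hAk : (fun t => Ak t - t/2) =O[𝓝[>] (0:ℝ)] fun t => t^3)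
    (hBi : (fun t => Bi t - b₀) =O[𝓝[>] (0:ℝ)] fun t => t^2)
    (hBj : (fun t => Bj t - b₀) =O[𝓝[>] (0:ℝ)] fun t => t^2)
    (hBk : (fun t => Bk t - b₀) =O[𝓝[>] (0:ℝ)] fun t => t^2)
    (hodep : ∀ t ∈ Set.Ioi (0:ℝ),
      HasDerivAt api (-(Ai t / (Bj t * Bk t) - Ai t / (Aj t * Ak t)) * api t) t)
    (hodem : ∀ t ∈ Set.Ioi (0:ℝ),
      HasDerivAt ami (-(Bi t / (Bj t * Ak t) + Bi t / (Aj t * Bk t)) * ami t) t)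
    (t₀ : ℝ) (ht₀ : 0 < t₀) :
    (∃ L : ℝ, Tendsto (fun t => api t / t^2) (𝓝[>] 0) (𝓝 L) ∧
        (api t₀ ≠ 0 → L ≠ 0)) ∧
    (∃ L : ℝ, Tendsto (fun t => ami t * t^4) (𝓝[>] 0) (𝓝 L) ∧
        (ami t₀ ≠ 0 → L ≠ 0)) ∧
    ((∃ l : ℝ, Tendsto ami (𝓝[>] 0) (𝓝 l)) → ∀ t ∈ Set.Ioi (0:ℝ), ami t = 0) := by
  -- the plus coefficient
  set fp : ℝ → ℝ := fun t => -(Ai t / (Bj t * Bk t) - Ai t / (Aj t * Ak t)) with hfp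
  have hfpc : ContinuousOn fp (Set.Ioi 0) := by
    apply ContinuousOn.neg
    apply ContinuousOn.sub
    · exact hAic.div (hBjc.mul hBkc) (fun t ht => by
        have := hBjpos t ht; have := hBkpos t ht; positivity)
    · exact hAic.div (hAjc.mul hAkc) (fun t ht => by
        have := hAjpos t ht; have := hAkpos t ht; positivity)
  have hfpO : (fun t => fp t - (2:ℝ)/t) =O[𝓝[>] (0:ℝ)] fun t => t :=
    coefP Ai Aj Ak Bj Bk b₀ hb₀ hAi hAj hAk hBj hBk
  obtain ⟨Lp, hLp, hLp0, _⟩ := key api fp 2 t₀ ht₀ hfpc hodep hfpO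
  -- the minus coefficient
  set fm : ℝ → ℝ := fun t => -(Bi t / (Bj t * Ak t) + Bi t / (Aj t * Bk t)) with hfm
  have hfmc : ContinuousOn fm (Set.Ioi 0) := by
    apply ContinuousOn.neg
    apply ContinuousOn.add
    · exact hBic.div (hBjc.mul hAkc) (fun t ht => by
        have := hBjpos t ht; have := hAkpos t ht; positivity)
    · exact hBic.div (hAjc.mul hBkc) (fun t ht => by
        have := hAjpos t ht; have := hBkpos t ht; positivity)
  have hfmO : (fun t => fm t - (-4:ℝ)/t) =O[𝓝[>] (0:ℝ)] fun t => t :=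
    coefM Bi Bj Bk Aj Ak b₀ hb₀ hBi hBj hBk hAj hAk
  obtain ⟨Lm, hLm, hLm0, hLmz⟩ := key ami fm (-4) t₀ ht₀ hfmc hodem hfmO
  have hmfin : Tendsto (fun t => ami t * t^4) (𝓝[>] (0:ℝ)) (𝓝 Lm) := by
    apply hLm.congr'
    filter_upwards [self_mem_nhdsWithin] with t ht
    have ht' : (0:ℝ) < t := ht
    have : Real.exp (-((-4:ℝ) * Real.log t)) = t^4 := by
      rw [show (-((-4:ℝ) * Real.log t)) = Real.log t + Real.log t + Real.log t + Real.log t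
        by ring, Real.exp_add, Real.exp_add, Real.exp_add, Real.exp_log ht']
      ring
    rw [this]
  refine ⟨⟨Lp, ?_, ?_⟩, ⟨Lm, hmfin, ?_⟩, ?_⟩
  · apply hLp.congr'
    filter_upwards [self_mem_nhdsWithin] with t ht
    have ht' : (0:ℝ) < t := ht
    have : Real.exp (-((2:ℝ) * Real.log t)) = 1/t^2 := by
      rw [Real.exp_neg, show ((2:ℝ) * Real.log t) = Real.log t + Real.log t by ring,
        Real.exp_add, Real.exp_log ht']
      rw [one_div]
      congr 1
      ring
    rw [this]
    ring
  · intro h hc; exact h (hLp0.1 hc)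
  · intro h hc; exact h (hLm0.1 hc)
  · rintro ⟨l, hl⟩ t ht
    have h4 : Tendsto (fun t : ℝ => t^4) (𝓝[>] (0:ℝ)) (𝓝 0) := by
      have : Tendsto (fun t : ℝ => t^4) (𝓝 0) (𝓝 (0^4)) := (continuous_pow 4).tendsto 0
      simpa using this.mono_left nhdsWithin_le_nhds
    have : Tendsto (fun t => ami t * t^4) (𝓝[>] (0:ℝ)) (𝓝 (l * 0)) := hl.mul h4
    rw [mul_zero] at this
    have hLm' : Lm = 0 := tendsto_nhds_unique hmfin this
    exact hLmz (hLm0.1 hLm') t ht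

/-- Abelian `SU(2)²`-invariant instanton ODEs: with `Aᵢ t = t/2 + O(t³)` and
`Bᵢ t = b₀ + O(t²)`, `b₀ > 0`, each `aᵢ⁺` behaves like `t²` (i.e. `aᵢ⁺/t²` has a finite
limit, nonzero when `aᵢ⁺ t₀ ≠ 0`) and each `aᵢ⁻` behaves like `t⁻⁴` (i.e. `aᵢ⁻·t⁴` has a
finite limit, nonzero when `aᵢ⁻ t₀ ≠ 0`) as `t → 0⁺`; in particular `aᵢ⁻` extends
continuously to `0` only if it vanishes identically. -/
theorem stmt14 (A B ap am : Fin 3 → ℝ → ℝ) (b₀ : ℝ) (hb₀ : 0 < b₀)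
    (hApos : ∀ i, ∀ t ∈ Set.Ioi (0:ℝ), 0 < A i t)
    (hBpos : ∀ i, ∀ t ∈ Set.Ioi (0:ℝ), 0 < B i t)
    (hAc : ∀ i, ContinuousOn (A i) (Set.Ioi 0))
    (hBc : ∀ i, ContinuousOn (B i) (Set.Ioi 0))
    (hAasym : ∀ i, (fun t => A i t - t/2) =O[𝓝[>] (0:ℝ)] fun t => t^3)
    (hBasym : ∀ i, (fun t => B i t - b₀) =O[𝓝[>] (0:ℝ)] fun t => t^2)
    (hode : ∀ i j k, Cyclic3 i j k → ∀ t ∈ Set.Ioi (0:ℝ),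
      HasDerivAt (ap i)
        (-(A i t / (B j t * B k t) - A i t / (A j t * A k t)) * ap i t) t ∧
      HasDerivAt (am i)
        (-(B i t / (B j t * A k t) + B i t / (A j t * B k t)) * am i t) t)
    (t₀ : ℝ) (ht₀ : 0 < t₀) :
    ∀ i : Fin 3,
      (∃ L : ℝ, Tendsto (fun t => ap i t / t^2) (𝓝[>] 0) (𝓝 L) ∧
        (ap i t₀ ≠ 0 → L ≠ 0)) ∧
      (∃ L : ℝ, Tendsto (fun t => am i t * t^4) (𝓝[>] 0) (𝓝 L) ∧
        (am i t₀ ≠ 0 → L ≠ 0)) ∧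
      ((∃ l : ℝ, Tendsto (am i) (𝓝[>] 0) (𝓝 l)) → ∀ t ∈ Set.Ioi (0:ℝ), am i t = 0) := by
  intro i
  fin_cases i
  · exact perIndex (A 0) (A 1) (A 2) (B 0) (B 1) (B 2) (ap 0) (am 0) b₀ hb₀
      (hApos 1) (hApos 2) (hBpos 1) (hBpos 2)
      (hAc 0) (hAc 1) (hAc 2) (hBc 0) (hBc 1) (hBc 2)
      (hAasym 0) (hAasym 1) (hAasym 2) (hBasym 0) (hBasym 1) (hBasym 2)
      (fun t ht => (hode 0 1 2 (Or.inl rfl) t ht).1)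
      (fun t ht => (hode 0 1 2 (Or.inl rfl) t ht).2) t₀ ht₀
  · exact perIndex (A 1) (A 2) (A 0) (B 1) (B 2) (B 0) (ap 1) (am 1) b₀ hb₀
      (hApos 2) (hApos 0) (hBpos 2) (hBpos 0)
      (hAc 1) (hAc 2) (hAc 0) (hBc 1) (hBc 2) (hBc 0)
      (hAasym 1) (hAasym 2) (hAasym 0) (hBasym 1) (hBasym 2) (hBasym 0)
      (fun t ht => (hode 1 2 0 (Or.inr (Or.inl rfl)) t ht).1)
      (fun t ht => (hode 1 2 0 (Or.inr (Or.inl rfl)) t ht).2) t₀ ht₀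
  · exact perIndex (A 2) (A 0) (A 1) (B 2) (B 0) (B 1) (ap 2) (am 2) b₀ hb₀
      (hApos 0) (hApos 1) (hBpos 0) (hBpos 1)
      (hAc 2) (hAc 0) (hAc 1) (hBc 2) (hBc 0) (hBc 1)
      (hAasym 2) (hAasym 0) (hAasym 1) (hBasym 2) (hBasym 0) (hBasym 1)
      (fun t ht => (hode 2 0 1 (Or.inr (Or.inr rfl)) t ht).1)
      (fun t ht => (hode 2 0 1 (Or.inr (Or.inr rfl)) t ht).2) t₀ ht₀
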